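/- If y : (0,a) → ℝ satisfies y''(r) = r·e^{y(r)}/y'(r) with y' > 0 on (0,a), and y(r) → +∞, y'(r) → +∞ as r → a⁻, then e^{y(r)}/y'(r)^3 → 1/(3a) as r → a⁻. -/

import Mathlib

open Real Set Filter Topology

theorem calabi_exp_div_cube_limit
    (a : ℝ) (ha : 0 < a) (y y' y'' : ℝ → ℝ)
    (hy' : ∀ r ∈ Ioo (0:ℝ) a, HasDerivAt y (y' r) r)
    (hy'' : ∀ r ∈ Ioo (0:ℝ) a, HasDerivAt y' (y'' r) r)
    (hy'pos : ∀ r ∈ Ioo (0:ℝ) a, 0 < y' r)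
    (hode : ∀ r ∈ Ioo (0:ℝ) a, y'' r = r * Real.exp (y r) / y' r)
    (hy_top : Tendsto y (𝓝[<] a) atTop)
    (hy'_top : Tendsto y' (𝓝[<] a) atTop)
 :
    Tendsto (fun r => Real.exp (y r) / (y' r) ^ 3) (𝓝[<] a) (𝓝 (1 / (3 * a))) := by
  have hexp_pos : ∀ r, (0:ℝ) < Real.exp (y r) := fun r => Real.exp_pos _
  set ψ : ℝ → ℝ := fun r => (y' r)^3 - 3*r*Real.exp (y r) with hψdef
  have hψd : ∀ r ∈ Ioo (0:ℝ) a, HasDerivAt ψ (-3 * Real.exp (y r)) r := by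
    intro r hr
    have h1 : HasDerivAt (fun s => (y' s)^3) (3 * (y' r)^2 * y'' r) r := by
      simpa using (hy'' r hr).fun_pow 3
    have h2 : HasDerivAt (fun s => 3*s*Real.exp (y s))
        (3*1*Real.exp (y r) + 3*r*(Real.exp (y r) * y' r)) r :=
      ((hasDerivAt_id r).const_mul 3).mul (hy' r hr).exp
    have h4 := h1.sub h2
    refine h4.congr_deriv ?_
    have hne : y' r ≠ 0 := (hy'pos r hr).ne'
    rw [hode r hr]
    field_simp
    ring
  have hcont : ContinuousOn y (Ioo 0 a) := fun r hr =>
    (hy' r hr).continuousAt.continuousWithinAt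
  have hmono : MonotoneOn y (Ioo 0 a) := by
    apply (strictMonoOn_of_deriv_pos (convex_Ioo 0 a) hcont ?_).monotoneOn
    intro r hr
    rw [interior_Ioo] at hr
    rw [(hy' r hr).deriv]
    exact hy'pos r hr
  have key : ∀ r₀ ∈ Ioo (0:ℝ) a, ∀ r ∈ Ioo (0:ℝ) a, r₀ ≤ r →
      |ψ r - ψ r₀| ≤ 3 * Real.exp (y r) * (r - r₀) := by
    intro r₀ hr₀ r hr hle
    have hsub : Icc r₀ r ⊆ Ioo (0:ℝ) a := fun x hx =>
      ⟨lt_of_lt_of_le hr₀.1 hx.1, lt_of_le_of_lt hx.2 hr.2⟩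
    have hsub' : uIcc r₀ r ⊆ Ioo (0:ℝ) a := by rw [uIcc_of_le hle]; exact hsub
    have hyc : ContinuousOn y (uIcc r₀ r) := hcont.mono hsub'
    have hint : IntervalIntegrable (fun s => -3*Real.exp (y s)) MeasureTheory.volume r₀ r :=
      (continuousOn_const.mul (Real.continuous_exp.comp_continuousOn hyc)).intervalIntegrable
    have hftc : ∫ s in r₀..r, -3*Real.exp (y s) = ψ r - ψ r₀ :=
      intervalIntegral.integral_eq_sub_of_hasDerivAt (fun x hx => hψd x (hsub' hx)) hint
    rw [← hftc]
    have hb : ∀ x ∈ Set.uIoc r₀ r, ‖-3*Real.exp (y x)‖ ≤ 3*Real.exp (y r) := by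
      intro x hx
      rw [Set.uIoc_of_le hle] at hx
      have hxm : x ∈ Ioo (0:ℝ) a := hsub ⟨le_of_lt hx.1, hx.2⟩
      have hyx : y x ≤ y r := hmono hxm hr hx.2
      have := Real.exp_le_exp.mpr hyx
      rw [norm_mul, Real.norm_eq_abs, Real.norm_eq_abs, abs_of_pos (hexp_pos x)]
      have : |(-3:ℝ)| = 3 := by norm_num
      rw [this]
      nlinarith [Real.exp_le_exp.mpr hyx]
    have hB := intervalIntegral.norm_integral_le_of_norm_le_const hb
    rw [Real.norm_eq_abs] at hB
    calc |∫ s in r₀..r, -3*Real.exp (y s)| ≤ 3*Real.exp (y r) * |r - r₀| := hB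
      _ = 3 * Real.exp (y r) * (r - r₀) := by rw [abs_of_nonneg (sub_nonneg.2 hle)]
  have hg : Tendsto (fun r => (y' r)^3 / Real.exp (y r)) (𝓝[<] a) (𝓝 (3*a)) := by
    rw [Metric.tendsto_nhds]
    intro ε hε
    set m := min (a/2) (ε/13) with hm
    have hm0 : 0 < m := lt_min (by linarith) (by linarith)
    have hm1 : m ≤ a/2 := min_le_left _ _
    have hm2 : m ≤ ε/13 := min_le_right _ _
    set r₀ := a - m with hr₀def
    have hr₀mem : r₀ ∈ Ioo (0:ℝ) a := ⟨by simp only [hr₀def]; linarith, by simp only [hr₀def]; linarith⟩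
    have hexp0 : Tendsto (fun r => Real.exp (-(y r))) (𝓝[<] a) (𝓝 0) :=
      Real.tendsto_exp_atBot.comp (tendsto_neg_atBot_iff.mpr hy_top)
    have hpos : (0:ℝ) < ε/(2*(|ψ r₀|+1)) := by positivity
    have hev1 : ∀ᶠ r in 𝓝[<] a, Real.exp (-(y r)) < ε/(2*(|ψ r₀|+1)) :=
      hexp0.eventually_lt_const hpos
    have hev2 : ∀ᶠ r in 𝓝[<] a, r₀ < r :=
      (eventually_gt_nhds hr₀mem.2).filter_mono nhdsWithin_le_nhds
    have hev3 : ∀ᶠ r in 𝓝[<] a, r ∈ Iio a := eventually_mem_nhdsWithin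
    filter_upwards [hev1, hev2, hev3] with r h1 h2 h3
    have h3' : r < a := h3
    have hrmem : r ∈ Ioo 0 a := ⟨hr₀mem.1.trans h2, h3'⟩
    have hk := key r₀ hr₀mem r hrmem h2.le
    have hE := hexp_pos r
    have hEinv : Real.exp (-(y r)) = (Real.exp (y r))⁻¹ := Real.exp_neg _
    rw [Real.dist_eq]
    have heq : (y' r)^3 / Real.exp (y r) - 3*a
        = ψ r₀ / Real.exp (y r) + (ψ r - ψ r₀)/Real.exp (y r) + (3*r - 3*a) := by
      simp only [hψdef]
      field_simp
      ring
    rw [heq]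
    have b1 : |ψ r₀ / Real.exp (y r)| ≤ (|ψ r₀|+1) * Real.exp (-(y r)) := by
      rw [abs_div, abs_of_pos hE, div_eq_mul_inv, ← hEinv]
      have : (0:ℝ) < Real.exp (-(y r)) := Real.exp_pos _
      nlinarith [abs_nonneg (ψ r₀)]
    have b2 : |(ψ r - ψ r₀)/Real.exp (y r)| ≤ 3*(r - r₀) := by
      rw [abs_div, abs_of_pos hE, div_le_iff₀ hE]
      calc |ψ r - ψ r₀| ≤ 3 * Real.exp (y r) * (r - r₀) := hk
        _ = 3*(r-r₀) * Real.exp (y r) := by ring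
    have b3 : |3*r - 3*a| ≤ 3*m := by
      rw [abs_of_nonpos (by linarith [h3'])]
      simp only [hr₀def] at h2
      linarith
    have hsmall : (|ψ r₀|+1) * Real.exp (-(y r)) < ε/2 := by
      have h1' : (|ψ r₀|+1) * Real.exp (-(y r)) < (|ψ r₀|+1) * (ε/(2*(|ψ r₀|+1))) := by
        apply mul_lt_mul_of_pos_left h1 (by positivity)
      have h2' : (|ψ r₀|+1) * (ε/(2*(|ψ r₀|+1))) = ε/2 := by
        field_simp
      linarith
    have hrr₀ : r - r₀ ≤ m := by simp only [hr₀def]; linarith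
    calc |ψ r₀ / Real.exp (y r) + (ψ r - ψ r₀)/Real.exp (y r) + (3*r - 3*a)|
        ≤ |ψ r₀ / Real.exp (y r)| + |(ψ r - ψ r₀)/Real.exp (y r)| + |3*r - 3*a| := by
          exact (abs_add_le _ _).trans (by gcongr; exact abs_add_le _ _)
      _ ≤ (|ψ r₀|+1) * Real.exp (-(y r)) + 3*(r-r₀) + 3*m := by gcongr
      _ < ε/2 + 3*m + 3*m := by
          have : 3*(r-r₀) ≤ 3*m := by linarith
          linarith
      _ < ε := by linarith
  have h3a : (3*a) ≠ 0 := by positivity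
  have hfin := hg.inv₀ h3a
  simp only [inv_div] at hfin
  rw [one_div]
  exact hfin
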